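/- Let λ₁ ≥ 0, σ₁ > 0, 0 ≤ τ_R ≤ τ_D, x₀ = (λ₁/σ₁)·[1 − e^{−(τ_D−τ_R)σ₁}/(2 − e^{−τ_D σ₁})], and let s ∈ [0, τ_D). Let M₀ ~ Poisson(x₀), let A be an e^{−σ₁ s}-thinning of M₀, let B ~ Poisson((λ₁/σ₁)(1 − e^{−s σ₁})), and, if s ≥ τ_R, let C ~ Poisson((λ₁/σ₁)(1 − e^{−(s−τ_R)σ₁})) (and C = 0 if s < τ_R), with A, B, C independent. Then A + B + C is Poisson(x_s) distributed, where x_s = (λ₁/σ₁)·[1 − e^{−(s+τ_D−τ_R)σ₁}/(2 − e^{−τ_D σ₁}) + 1_{s ≥ τ_R}·(1 − e^{−(s−τ_R)σ₁})]. -/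

import Mathlib

open MeasureTheory ProbabilityTheory

/-- `X` has the Poisson distribution with (real, nonnegative) parameter `r`:
`ℙ[X = n] = e^{-r} r^n / n!` for all `n : ℕ`. -/
def HasPoissonLaw {Ω : Type*} [MeasurableSpace Ω] (μ : Measure Ω) (r : ℝ)
    (X : Ω → ℕ) : Prop :=
  ∀ n : ℕ, μ {ω | X ω = n} = ENNReal.ofReal (Real.exp (-r) * r ^ n / n.factorial)

/-- `Y` is an `r`-thinning of `X`: `Y = ∑_{i < X} B i` for some family `(B i)` of
i.i.d. Bernoulli(`r`) random variables independent of `X`. -/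
def IsThinning {Ω : Type*} [MeasurableSpace Ω] (μ : Measure Ω) (r : ℝ)
    (X Y : Ω → ℕ) : Prop :=
  ∃ B : ℕ → Ω → ℕ, (∀ i, Measurable (B i)) ∧
    (∀ i, μ {ω | B i ω = 1} = ENNReal.ofReal r) ∧
    (∀ i, μ {ω | B i ω = 0} = ENNReal.ofReal (1 - r)) ∧
    iIndepFun (fun i : ℕ => if i = 0 then X else B (i - 1)) μ ∧
    ∀ ω, Y ω = ∑ i ∈ Finset.range (X ω), B i ω

lemma poisson_sum_aux (a b : ℝ) (n : ℕ) :
    ∑ k ∈ Finset.range (n + 1),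
      (Real.exp (-a) * a ^ k / k.factorial) * (Real.exp (-b) * b ^ (n - k) / (n - k).factorial)
    = Real.exp (-(a + b)) * (a + b) ^ n / n.factorial := by
  have key : ∀ k ∈ Finset.range (n + 1),
      (Real.exp (-a) * a ^ k / k.factorial) * (Real.exp (-b) * b ^ (n - k) / (n - k).factorial)
      = Real.exp (-a) * Real.exp (-b) / n.factorial * (a ^ k * b ^ (n - k) * n.choose k) := by
    intro k hk
    have hk' : k ≤ n := by simp at hk; omega
    have h : (n.factorial : ℝ) = n.choose k * k.factorial * (n - k).factorial := by
      exact_mod_cast (Nat.choose_mul_factorial_mul_factorial hk').symm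
    have h1 : (k.factorial : ℝ) ≠ 0 := by positivity
    have h2 : ((n - k).factorial : ℝ) ≠ 0 := by positivity
    have h3 : (n.factorial : ℝ) ≠ 0 := by positivity
    have h4 : (n.choose k : ℝ) ≠ 0 := by
      exact_mod_cast (Nat.choose_pos hk').ne'
    field_simp [h]
    rw [h]; ring
  rw [Finset.sum_congr rfl key, ← Finset.mul_sum, ← add_pow, ← Real.exp_add]
  ring_nf

lemma poisson_add {Ω : Type*} [MeasurableSpace Ω] (μ : Measure Ω) [IsProbabilityMeasure μ]
    {a b : ℝ} (ha : 0 ≤ a) (hb : 0 ≤ b) {X Y : Ω → ℕ}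
    (hX : Measurable X) (hY : Measurable Y)
    (hXlaw : HasPoissonLaw μ a X) (hYlaw : HasPoissonLaw μ b Y)
    (hInd : IndepFun X Y μ) :
    HasPoissonLaw μ (a + b) (fun ω => X ω + Y ω) := by
  intro n
  have hset : {ω | X ω + Y ω = n}
      = ⋃ k ∈ Finset.range (n + 1), (X ⁻¹' {k} ∩ Y ⁻¹' {n - k}) := by
    ext ω
    simp only [Set.mem_setOf_eq, Set.mem_iUnion, Finset.mem_range, Set.mem_inter_iff,
      Set.mem_preimage, Set.mem_singleton_iff]
    constructor
    · intro h; exact ⟨X ω, by omega, rfl, by omega⟩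
    · rintro ⟨k, hk, rfl, h2⟩; omega
  rw [hset, measure_biUnion_finset]
  · have step : ∀ k ∈ Finset.range (n + 1),
        μ (X ⁻¹' {k} ∩ Y ⁻¹' {n - k}) = ENNReal.ofReal
          ((Real.exp (-a) * a ^ k / k.factorial) *
            (Real.exp (-b) * b ^ (n - k) / (n - k).factorial)) := by
      intro k _
      rw [hInd.measure_inter_preimage_eq_mul _ _ (measurableSet_singleton _)
        (measurableSet_singleton _)]
      have h1 : μ (X ⁻¹' {k}) = ENNReal.ofReal (Real.exp (-a) * a ^ k / k.factorial) := hXlaw k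
      have h2 : μ (Y ⁻¹' {n - k}) = ENNReal.ofReal
          (Real.exp (-b) * b ^ (n - k) / (n - k).factorial) := hYlaw (n - k)
      rw [h1, h2, ← ENNReal.ofReal_mul (by positivity)]
    rw [Finset.sum_congr rfl step, ← ENNReal.ofReal_sum_of_nonneg
      (fun k _ => by positivity), poisson_sum_aux]
  · intro i hi j hj hij
    simp only [Function.onFun, Set.disjoint_left]
    rintro ω ⟨h1, _⟩ ⟨h3, _⟩
    simp only [Set.mem_preimage, Set.mem_singleton_iff] at h1 h3
    exact hij (h1 ▸ h3 ▸ rfl)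
  · exact fun k _ => (hX (measurableSet_singleton _)).inter (hY (measurableSet_singleton _))

lemma binom_rec (r : ℝ) (m n : ℕ) :
    ((m + 1).choose n : ℝ) * r ^ n * (1 - r) ^ (m + 1 - n)
    = (m.choose n : ℝ) * r ^ n * (1 - r) ^ (m - n) * (1 - r)
      + (if n = 0 then 0
         else (m.choose (n - 1) : ℝ) * r ^ (n - 1) * (1 - r) ^ (m - (n - 1)) * r) := by
  rcases n with _ | k
  · simp [pow_succ]
  · simp only [if_neg (Nat.succ_ne_zero k), Nat.succ_sub_one]
    rcases le_or_gt (k + 1) m with h | h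
    · have h2 : m - k = m - (k + 1) + 1 := by omega
      rw [Nat.choose_succ_succ m k, Nat.succ_eq_add_one]
      push_cast
      rw [h2]
      ring
    · rcases eq_or_lt_of_le (Nat.succ_le_of_lt h) with h' | h'
      · -- k + 1 = m + 1, i.e. k = m
        have hk : k = m := by omega
        subst hk
        rw [Nat.choose_self, Nat.choose_succ_self, Nat.choose_self]
        simp [pow_succ]
      · rw [Nat.choose_eq_zero_of_lt (by omega), Nat.choose_eq_zero_of_lt (by omega),
          Nat.choose_eq_zero_of_lt (by omega)]
        simp

lemma poisson_thinning {Ω : Type*} [MeasurableSpace Ω] (μ : Measure Ω) [IsProbabilityMeasure μ]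
    {r x0 : ℝ} (hr0 : 0 ≤ r) (hr1 : r ≤ 1) (hx0 : 0 ≤ x0) {M0 A : Ω → ℕ}
    (hM0 : Measurable M0) (hM0law : HasPoissonLaw μ x0 M0)
    (hthin : IsThinning μ r M0 A) : HasPoissonLaw μ (r * x0) A := by
  obtain ⟨B, hBmeas, hB1, hB0, hBindep, hAeq⟩ := hthin
  have hr1' : (0 : ℝ) ≤ 1 - r := by linarith
  set g : ℕ → Ω → ℕ := fun i => if i = 0 then M0 else B (i - 1) with hgdef
  have hgmeas : ∀ i, Measurable (g i) := by
    intro i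
    by_cases h : i = 0
    · simpa [hgdef, h] using hM0
    · simpa [hgdef, h] using hBmeas (i - 1)
  let e : ℕ ↪ ℕ := ⟨Nat.succ, Nat.succ_injective⟩
  have hsum : ∀ m : ℕ, (∑ j ∈ (Finset.range m).map e, g j)
      = fun ω => ∑ i ∈ Finset.range m, B i ω := by
    intro m
    funext ω
    rw [Finset.sum_apply, Finset.sum_map]
    refine Finset.sum_congr rfl fun i _ => ?_
    simp [hgdef, e]
  have hSmeas : ∀ m, Measurable (fun ω => ∑ i ∈ Finset.range m, B i ω) := fun m =>
    Finset.measurable_sum _ (fun i _ => hBmeas i)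
  have hindS : ∀ m : ℕ, IndepFun (fun ω => ∑ i ∈ Finset.range m, B i ω) (B m) μ := by
    intro m
    have hnot : (m + 1 : ℕ) ∉ (Finset.range m).map e := by
      simp only [Finset.mem_map, Finset.mem_range, not_exists]
      rintro a ⟨ha, hae⟩
      have : a.succ = m + 1 := hae
      omega
    have h := hBindep.indepFun_finsetSum_of_notMem hgmeas hnot
    rw [hsum m] at h
    simpa [hgdef] using h
  have hindM : ∀ m : ℕ, IndepFun M0 (fun ω => ∑ i ∈ Finset.range m, B i ω) μ := by
    intro m
    have hnot : (0 : ℕ) ∉ (Finset.range m).map e := by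
      simp only [Finset.mem_map, Finset.mem_range, not_exists]
      rintro a ⟨ha, hae⟩
      exact Nat.succ_ne_zero a hae
    have h := hBindep.indepFun_finsetSum_of_notMem hgmeas hnot
    rw [hsum m] at h
    have h' := h.symm
    simpa [hgdef] using h'
  -- null set where B m is not 0/1
  have hnullc : ∀ i, μ ({ω | B i ω = 0} ∪ {ω | B i ω = 1})ᶜ = 0 := by
    intro i
    have hm0 : MeasurableSet {ω | B i ω = 0} := hBmeas i (measurableSet_singleton 0)
    have hm1 : MeasurableSet {ω | B i ω = 1} := hBmeas i (measurableSet_singleton 1)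
    have hdisj : Disjoint {ω | B i ω = 0} {ω | B i ω = 1} := by
      rw [Set.disjoint_left]
      intro ω h0 h1
      simp only [Set.mem_setOf_eq] at h0 h1
      omega
    have htot : μ ({ω | B i ω = 0} ∪ {ω | B i ω = 1}) = 1 := by
      rw [measure_union hdisj hm1, hB0 i, hB1 i, ← ENNReal.ofReal_add hr1' hr0]
      norm_num
    rw [measure_compl (hm0.union hm1) (measure_ne_top μ _), htot]
    simp
  -- binomial law of partial sums
  have hbinom : ∀ m n : ℕ, μ {ω | (∑ i ∈ Finset.range m, B i ω) = n}
      = ENNReal.ofReal ((m.choose n : ℝ) * r ^ n * (1 - r) ^ (m - n)) := by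
    intro m
    induction m with
    | zero =>
      intro n
      cases n with
      | zero => simp
      | succ k =>
        have : {ω : Ω | (∑ i ∈ Finset.range 0, B i ω) = k + 1} = ∅ := by
          ext ω; simp
        rw [this]
        simp [Nat.choose_eq_zero_of_lt (by omega : (0:ℕ) < k + 1)]
    | succ m ih =>
      intro n
      have hEeq : {ω | (∑ i ∈ Finset.range (m + 1), B i ω) = n}
          = {ω | (∑ i ∈ Finset.range m, B i ω) + B m ω = n} := by
        ext ω; simp [Finset.sum_range_succ]
      rw [hEeq]
      set S := fun ω => ∑ i ∈ Finset.range m, B i ω with hSdef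
      set E := {ω | S ω + B m ω = n} with hEdef
      set T0 := {ω | B m ω = 0} with hT0def
      set T1 := {ω | B m ω = 1} with hT1def
      have hm0 : MeasurableSet T0 := hBmeas m (measurableSet_singleton 0)
      have hm1 : MeasurableSet T1 := hBmeas m (measurableSet_singleton 1)
      have hEmeas : MeasurableSet E := ((hSmeas m).add (hBmeas m)) (measurableSet_singleton n)
      have hsplit : μ E = μ (E ∩ T0) + μ (E ∩ T1) := by
        have h1 : μ E = μ (E ∩ (T0 ∪ T1)) := by
          rw [← measure_inter_add_diff E (hm0.union hm1)]
          have : μ (E \ (T0 ∪ T1)) = 0 :=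
            measure_mono_null (fun ω hω => hω.2) (hnullc m)
          rw [this, add_zero]
        have h2 : E ∩ (T0 ∪ T1) = (E ∩ T0) ∪ (E ∩ T1) := Set.inter_union_distrib_left E T0 T1
        have hdisj : Disjoint (E ∩ T0) (E ∩ T1) := by
          rw [Set.disjoint_left]
          rintro ω ⟨_, h0⟩ ⟨_, h1⟩
          simp only [hT0def, hT1def, Set.mem_setOf_eq] at h0 h1
          omega
        rw [h1, h2, measure_union hdisj (hEmeas.inter hm1)]
      have hprod : ∀ (k v : ℕ), μ ({ω | S ω = k} ∩ {ω | B m ω = v})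
          = μ {ω | S ω = k} * μ {ω | B m ω = v} :=
        fun k v => (hindS m).measure_inter_preimage_eq_mul {k} {v}
          (measurableSet_singleton k) (measurableSet_singleton v)
      have hnn : ∀ (a b : ℕ), (0:ℝ) ≤ (a.choose b : ℝ) * r ^ b * (1 - r) ^ (a - b) :=
        fun a b => mul_nonneg (mul_nonneg (Nat.cast_nonneg _) (pow_nonneg hr0 _))
          (pow_nonneg hr1' _)
      rcases n with _ | k
      · have hE1 : E ∩ T1 = ∅ := by
          ext ω
          simp only [hEdef, hT1def, Set.mem_inter_iff, Set.mem_setOf_eq, Set.mem_empty_iff_false,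
            iff_false, not_and]
          intro h1 h2
          omega
        have hE0 : E ∩ T0 = {ω | S ω = 0} ∩ T0 := by
          ext ω
          simp only [hEdef, hT0def, Set.mem_inter_iff, Set.mem_setOf_eq]
          omega
        rw [hsplit, hE1, measure_empty, add_zero, hE0, hprod 0 0, ih 0, hB0 m,
          ← ENNReal.ofReal_mul (hnn m 0)]
        congr 1
        simp [pow_succ]
      · have hE1 : E ∩ T1 = {ω | S ω = k} ∩ T1 := by
          ext ω
          simp only [hEdef, hT1def, Set.mem_inter_iff, Set.mem_setOf_eq]
          omega
        have hE0 : E ∩ T0 = {ω | S ω = k + 1} ∩ T0 := by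
          ext ω
          simp only [hEdef, hT0def, Set.mem_inter_iff, Set.mem_setOf_eq]
          omega
        rw [hsplit, hE0, hE1, hprod (k + 1) 0, hprod k 1, ih (k + 1), ih k, hB0 m, hB1 m,
          ← ENNReal.ofReal_mul (hnn m (k + 1)), ← ENNReal.ofReal_mul (hnn m k),
          ← ENNReal.ofReal_add (mul_nonneg (hnn m (k + 1)) hr1') (mul_nonneg (hnn m k) hr0)]
        congr 1
        have := binom_rec r m (k + 1)
        simp only [if_neg (Nat.succ_ne_zero k), Nat.succ_sub_one] at this
        linarith [this]
  -- law of A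
  intro n
  set p : ℕ → ℝ := fun m => (Real.exp (-x0) * x0 ^ m / m.factorial)
    * ((m.choose n : ℝ) * r ^ n * (1 - r) ^ (m - n)) with hpdef
  have hAset : {ω | A ω = n}
      = ⋃ m, ({ω | M0 ω = m} ∩ {ω | (∑ i ∈ Finset.range m, B i ω) = n}) := by
    ext ω
    simp only [Set.mem_setOf_eq, Set.mem_iUnion, Set.mem_inter_iff]
    constructor
    · intro h
      exact ⟨M0 ω, rfl, by rw [← hAeq ω]; exact h⟩
    · rintro ⟨m, h1, h2⟩
      rw [hAeq ω, h1]
      exact h2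
  have hdisj : Pairwise (Function.onFun Disjoint
      fun m => ({ω | M0 ω = m} ∩ {ω | (∑ i ∈ Finset.range m, B i ω) = n})) := by
    intro i j hij
    simp only [Function.onFun, Set.disjoint_left]
    rintro ω ⟨h1, _⟩ ⟨h3, _⟩
    simp only [Set.mem_setOf_eq] at h1 h3
    exact hij (h1 ▸ h3 ▸ rfl)
  have hmeas : ∀ m, MeasurableSet ({ω | M0 ω = m} ∩ {ω | (∑ i ∈ Finset.range m, B i ω) = n}) :=
    fun m => (hM0 (measurableSet_singleton m)).inter ((hSmeas m) (measurableSet_singleton n))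
  rw [hAset, measure_iUnion hdisj hmeas]
  have hterm : ∀ m, μ ({ω | M0 ω = m} ∩ {ω | (∑ i ∈ Finset.range m, B i ω) = n})
      = ENNReal.ofReal (p m) := by
    intro m
    have hpre : ({ω | M0 ω = m} ∩ {ω | (∑ i ∈ Finset.range m, B i ω) = n})
        = (M0 ⁻¹' {m} ∩ (fun ω => ∑ i ∈ Finset.range m, B i ω) ⁻¹' {n}) := rfl
    rw [hpre, (hindM m).measure_inter_preimage_eq_mul {m} {n}
      (measurableSet_singleton m) (measurableSet_singleton n)]
    have e1 : μ (M0 ⁻¹' {m}) = ENNReal.ofReal (Real.exp (-x0) * x0 ^ m / m.factorial) :=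
      hM0law m
    have e2 : μ ((fun ω => ∑ i ∈ Finset.range m, B i ω) ⁻¹' {n})
        = ENNReal.ofReal ((m.choose n : ℝ) * r ^ n * (1 - r) ^ (m - n)) := hbinom m n
    rw [e1, e2, ← ENNReal.ofReal_mul (by positivity)]
  simp only [hterm]
  -- reindex m = n + j
  set f : ℕ → ℝ := fun j =>
    Real.exp (-x0) * (r * x0) ^ n / n.factorial * ((x0 * (1 - r)) ^ j / j.factorial) with hfdef
  have hinj : Function.Injective (fun j : ℕ => n + j) := fun a b hab => by
    have hab' : n + a = n + b := hab
    omega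
  have hsupp : Function.support (fun m => ENNReal.ofReal (p m))
      ⊆ Set.range (fun j : ℕ => n + j) := by
    intro m hm
    rcases le_or_gt n m with h | h
    · exact ⟨m - n, show n + (m - n) = m by omega⟩
    · exfalso
      apply hm
      simp [hpdef, Nat.choose_eq_zero_of_lt h]
  have hre : ∑' m, ENNReal.ofReal (p m) = ∑' j, ENNReal.ofReal (p (n + j)) :=
    (hinj.tsum_eq hsupp).symm
  have hpf : ∀ j, p (n + j) = f j := by
    intro j
    have h1 : n + j - n = j := by omega
    have h2 : ((n + j).factorial : ℝ)
        = ((n + j).choose n : ℝ) * n.factorial * j.factorial := by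
      have h := Nat.choose_mul_factorial_mul_factorial (Nat.le_add_right n j)
      rw [h1] at h
      exact_mod_cast h.symm
    have hc : ((n + j).choose n : ℝ) ≠ 0 := by
      exact_mod_cast (Nat.choose_pos (Nat.le_add_right n j)).ne'
    have hnf : (n.factorial : ℝ) ≠ 0 := by positivity
    have hjf : (j.factorial : ℝ) ≠ 0 := by positivity
    simp only [hpdef, hfdef, h1, mul_pow]
    field_simp [h2]
    rw [h2]; ring
  have hsummable : Summable f :=
    (Real.summable_pow_div_factorial (x0 * (1 - r))).mul_left _
  have hfnn : ∀ j, 0 ≤ f j := by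
    intro j
    have : (0:ℝ) ≤ r * x0 := mul_nonneg hr0 hx0
    have : (0:ℝ) ≤ x0 * (1 - r) := mul_nonneg hx0 hr1'
    positivity
  have hexp : ∑' j, ((x0 * (1 - r)) ^ j / (j.factorial : ℝ)) = Real.exp (x0 * (1 - r)) := by
    rw [Real.exp_eq_exp_ℝ, NormedSpace.exp_eq_tsum_div]
  rw [hre]
  simp only [hpf]
  rw [← ENNReal.ofReal_tsum_of_nonneg hfnn hsummable]
  congr 1
  rw [hfdef]
  simp only
  rw [tsum_mul_left, hexp]
  have hkey : Real.exp (-x0) * Real.exp (x0 * (1 - r)) = Real.exp (-(r * x0)) := by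
    rw [← Real.exp_add]
    ring_nf
  calc Real.exp (-x0) * (r * x0) ^ n / ↑n.factorial * Real.exp (x0 * (1 - r))
      = (Real.exp (-x0) * Real.exp (x0 * (1 - r))) * (r * x0) ^ n / ↑n.factorial := by ring
    _ = Real.exp (-(r * x0)) * (r * x0) ^ n / ↑n.factorial := by rw [hkey]

/-- At equilibrium, at time `s ∈ [0, τ_D)` of the cell cycle, the mRNA
number is Poisson distributed with parameter
`x_s = (λ₁/σ₁)(1 − e^{−(s+τ_D−τ_R)σ₁}/(2 − e^{−τ_D σ₁}) + 1_{s ≥ τ_R}(1 − e^{−(s−τ_R)σ₁}))`: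
if `M₀ ~ Poisson(x₀)`, `A` is an `e^{−σ₁ s}`-thinning of `M₀`,
`B ~ Poisson((λ₁/σ₁)(1 − e^{−s σ₁}))`, `C ~ Poisson((λ₁/σ₁)(1 − e^{−(s−τ_R)σ₁}))` when
`s ≥ τ_R` and `C = 0` otherwise, and `A, B, C` are independent, then `A + B + C` is
Poisson(x_s) distributed. -/
theorem mRNA_number_poisson_during_cycle
    {Ω : Type*} [MeasurableSpace Ω] (μ : Measure Ω) [IsProbabilityMeasure μ]
    (lam1 sig1 tauR tauD s : ℝ)
    (hlam1 : 0 ≤ lam1) (hsig1 : 0 < sig1) (htauR : 0 ≤ tauR) (htauRD : tauR ≤ tauD)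
    (hs0 : 0 ≤ s) (hsD : s < tauD)
    (x0 : ℝ)
    (hx0 : x0 = lam1 / sig1
      * (1 - Real.exp (-(tauD - tauR) * sig1) / (2 - Real.exp (-tauD * sig1))))
    (M0 A B C : Ω → ℕ)
    (hM0 : Measurable M0) (hA : Measurable A) (hB : Measurable B) (hC : Measurable C)
    (hM0law : HasPoissonLaw μ x0 M0)
    (hAthin : IsThinning μ (Real.exp (-sig1 * s)) M0 A)
    (hBlaw : HasPoissonLaw μ (lam1 / sig1 * (1 - Real.exp (-s * sig1))) B)
    (hClaw : if tauR ≤ s then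
        HasPoissonLaw μ (lam1 / sig1 * (1 - Real.exp (-(s - tauR) * sig1))) C
      else ∀ ω, C ω = 0)
    (hIndep : iIndepFun ![A, B, C] μ) :
    HasPoissonLaw μ
      (lam1 / sig1 * (1 - Real.exp (-(s + tauD - tauR) * sig1) / (2 - Real.exp (-tauD * sig1))
        + (if tauR ≤ s then 1 else 0) * (1 - Real.exp (-(s - tauR) * sig1))))
      (fun ω => A ω + B ω + C ω) := by
  have hls : 0 ≤ lam1 / sig1 := div_nonneg hlam1 hsig1.le
  -- basic exp facts
  have hexpD : Real.exp (-tauD * sig1) ≤ 1 := by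
    rw [Real.exp_le_one_iff]
    nlinarith
  have hden : (1 : ℝ) ≤ 2 - Real.exp (-tauD * sig1) := by linarith
  have hfrac : Real.exp (-(tauD - tauR) * sig1) / (2 - Real.exp (-tauD * sig1)) ≤ 1 := by
    have hnum : Real.exp (-(tauD - tauR) * sig1) ≤ 1 := by
      rw [Real.exp_le_one_iff]; nlinarith
    have : (0:ℝ) < 2 - Real.exp (-tauD * sig1) := by linarith
    rw [div_le_one this]
    linarith
  have hfrac0 : 0 ≤ Real.exp (-(tauD - tauR) * sig1) / (2 - Real.exp (-tauD * sig1)) := by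
    positivity
  have hx0nn : 0 ≤ x0 := by
    rw [hx0]
    exact mul_nonneg hls (by linarith)
  -- thinning parameter
  set r : ℝ := Real.exp (-sig1 * s) with hrdef
  have hr0 : 0 ≤ r := (Real.exp_pos _).le
  have hr1 : r ≤ 1 := by
    rw [hrdef, Real.exp_le_one_iff]
    nlinarith
  have hAlaw : HasPoissonLaw μ (r * x0) A :=
    poisson_thinning μ hr0 hr1 hx0nn hM0 hM0law hAthin
  -- B parameter nonneg
  have hbnn : 0 ≤ lam1 / sig1 * (1 - Real.exp (-s * sig1)) := by
    apply mul_nonneg hls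
    have : Real.exp (-s * sig1) ≤ 1 := by rw [Real.exp_le_one_iff]; nlinarith
    linarith
  -- C law uniform
  set c : ℝ := (if tauR ≤ s then 1 else 0) * (lam1 / sig1 * (1 - Real.exp (-(s - tauR) * sig1)))
    with hcdef
  have hcnn : 0 ≤ c := by
    rw [hcdef]
    split_ifs with h
    · rw [one_mul]
      apply mul_nonneg hls
      have : Real.exp (-(s - tauR) * sig1) ≤ 1 := by rw [Real.exp_le_one_iff]; nlinarith
      linarith
    · simp
  have hClaw' : HasPoissonLaw μ c C := by
    rw [hcdef]
    split_ifs at hClaw ⊢ with h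
    · rw [one_mul]
      exact hClaw
    · rw [zero_mul]
      intro n
      cases n with
      | zero =>
        have : {ω | C ω = 0} = Set.univ := by
          ext ω; simp [hClaw ω]
        rw [this]
        simp [Real.exp_zero]
      | succ k =>
        have : {ω | C ω = k + 1} = ∅ := by
          ext ω; simp [hClaw ω]
        rw [this]
        simp [zero_pow (Nat.succ_ne_zero k)]
  -- independence
  have hAB : IndepFun A B μ := by
    have := hIndep.indepFun (i := 0) (j := 1) (by decide)
    simpa using this
  have hABC : IndepFun (fun ω => A ω + B ω) C μ := by
    have hmeas : ∀ i, Measurable (![A, B, C] i) := by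
      intro i
      fin_cases i <;> simpa
    have := hIndep.indepFun_add_left hmeas 0 1 2 (by decide) (by decide)
    simp at this
    exact this
  have hABlaw := poisson_add μ (mul_nonneg hr0 hx0nn) hbnn hA hB hAlaw hBlaw hAB
  have hfinal := poisson_add μ (add_nonneg (mul_nonneg hr0 hx0nn) hbnn) hcnn
    (hA.add hB) hC hABlaw hClaw' hABC
  have hparam : r * x0 + lam1 / sig1 * (1 - Real.exp (-s * sig1)) + c
      = lam1 / sig1 * (1 - Real.exp (-(s + tauD - tauR) * sig1) / (2 - Real.exp (-tauD * sig1))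
        + (if tauR ≤ s then 1 else 0) * (1 - Real.exp (-(s - tauR) * sig1))) := by
    have h1 : Real.exp (-(s + tauD - tauR) * sig1)
        = Real.exp (-sig1 * s) * Real.exp (-(tauD - tauR) * sig1) := by
      rw [← Real.exp_add]; ring_nf
    have h2 : Real.exp (-s * sig1) = Real.exp (-sig1 * s) := by ring_nf
    rw [hcdef, hx0, hrdef, h1, h2]
    ring
  rw [← hparam]
  exact hfinal
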